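/- Let $2 < p < \infty$ with $1/p + 1/p' = 1$, let $\Omega \subset \mathbb{R}^d$ be bounded with finite measure $|\Omega|$, let $\Sigma \subset L^{p'}(\Omega;\mathbb{R}^d)$ be a nonempty closed affine subspace, and let $\sigma$ minimize $\mathcal{J}^*(\tau) = \frac{1}{p'}\int_\Omega |\tau|^{p'}dx$ over $\Sigma$, and $\sigma_\zeta$ minimize $\mathcal{J}^*_\zeta(\tau) = \int_\Omega \kappa^*_\zeta(|\tau|)dx$ over $\Sigma$. If $\sigma \in L^r(\Omega;\mathbb{R}^d)$ for some $r > 2$, then $\mathcal{J}^*(\sigma_\zeta) - \mathcal{J}^*(\sigma) \leq \mathcal{J}^*_\zeta(\sigma_\zeta) - \mathcal{J}^*(\sigma) \leq \frac{|\Omega|}{p'}\zeta_-^{p'} + \frac{1}{p'}\zeta_+^{-(r-p')}\|\sigma\|_{L^r(\Omega)}^r$. -/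

import Mathlib

open MeasureTheory
/-- The regularized integrand `κ*_ζ` with relaxation interval `[ζ₋, ζ₊]`. -/
noncomputable def kappaStar (p' ζm ζp : ℝ) (t : ℝ) : ℝ :=
  if t ≤ ζm then (1 / 2) * ζm ^ (p' - 2) * t ^ 2 + (1 / p' - 1 / 2) * ζm ^ p'
  else if t ≤ ζp then (1 / p') * t ^ p'
  else (1 / 2) * ζp ^ (p' - 2) * t ^ 2 + (1 / p' - 1 / 2) * ζp ^ p'


lemma quad_lower (p' ζ t : ℝ) (hp1 : 1 < p') (hp2 : p' < 2) (hζ : 0 < ζ) (ht : 0 ≤ t) :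
    (1 / p') * t ^ p' ≤ (1 / 2) * ζ ^ (p' - 2) * t ^ 2 + (1 / p' - 1 / 2) * ζ ^ p' := by
  have hp0 : 0 < p' := by linarith
  have hx : (0:ℝ) ≤ ζ ^ (p' - 2) * t ^ 2 := by positivity
  have hy : (0:ℝ) ≤ ζ ^ p' := by positivity
  have hgm := Real.geom_mean_le_arith_mean2_weighted (w₁ := p'/2) (w₂ := 1 - p'/2)
    (p₁ := ζ ^ (p' - 2) * t ^ 2) (p₂ := ζ ^ p')
    (by linarith) (by linarith) hx hy (by ring)
  have hid : (ζ ^ (p' - 2) * t ^ 2) ^ (p'/2) * (ζ ^ p') ^ (1 - p'/2) = t ^ p' := by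
    rw [Real.mul_rpow (by positivity) (by positivity), ← Real.rpow_natCast t 2,
      ← Real.rpow_mul ht, ← Real.rpow_mul hζ.le, ← Real.rpow_mul hζ.le,
      mul_right_comm, ← Real.rpow_add hζ]
    rw [show (p' - 2) * (p'/2) + p' * (1 - p'/2) = 0 by ring, Real.rpow_zero, one_mul]
    norm_num
    congr 1
    ring
  rw [hid] at hgm
  have heq : (1/p') * ((p'/2) * (ζ ^ (p' - 2) * t ^ 2) + (1 - p'/2) * ζ ^ p')
      = (1 / 2) * ζ ^ (p' - 2) * t ^ 2 + (1 / p' - 1 / 2) * ζ ^ p' := by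
    field_simp
  calc (1/p') * t ^ p' ≤ (1/p') * ((p'/2) * (ζ ^ (p' - 2) * t ^ 2) + (1 - p'/2) * ζ ^ p') := by
        apply mul_le_mul_of_nonneg_left hgm (by positivity)
    _ = _ := heq

lemma kappa_lower (p' ζm ζp t : ℝ) (hp1 : 1 < p') (hp2 : p' < 2) (hζm : 0 < ζm)
    (hζ : ζm ≤ ζp) (ht : 0 ≤ t) :
    (1 / p') * t ^ p' ≤ kappaStar p' ζm ζp t := by
  have hζp : 0 < ζp := lt_of_lt_of_le hζm hζ
  unfold kappaStar
  split_ifs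
  · exact quad_lower p' ζm t hp1 hp2 hζm ht
  · exact le_rfl
  · exact quad_lower p' ζp t hp1 hp2 hζp ht

lemma kappa_upper (p' r ζm ζp t : ℝ) (hp1 : 1 < p') (hp2 : p' < 2) (hr : 2 < r)
    (hζm : 0 < ζm) (hζ : ζm ≤ ζp) (ht : 0 ≤ t) :
    kappaStar p' ζm ζp t ≤
      (1 / p') * t ^ p' + (1 / p') * ζm ^ p' + (1 / p') * ζp ^ (p' - r) * t ^ r := by
  have hp0 : 0 < p' := by linarith
  have hζp : 0 < ζp := lt_of_lt_of_le hζm hζ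
  have h1 : (0:ℝ) ≤ (1 / p') * t ^ p' := by positivity
  have h2 : (0:ℝ) ≤ (1 / p') * ζm ^ p' := by positivity
  have h3 : (0:ℝ) ≤ (1 / p') * ζp ^ (p' - r) * t ^ r := by positivity
  have hhalf : (1:ℝ)/2 ≤ 1/p' := by
    rw [div_le_div_iff₀ (by norm_num) hp0]; linarith
  unfold kappaStar
  split_ifs with h4 h5
  · -- t ≤ ζm
    have key : ζm ^ (p' - 2) * t ^ 2 ≤ ζm ^ p' := by
      have ht2 : t ^ 2 ≤ ζm ^ 2 := by nlinarith
      calc ζm ^ (p' - 2) * t ^ 2 ≤ ζm ^ (p' - 2) * ζm ^ 2 := by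
            apply mul_le_mul_of_nonneg_left ht2 (by positivity)
        _ = ζm ^ p' := by
            rw [← Real.rpow_natCast ζm 2, ← Real.rpow_add hζm]; norm_num
    nlinarith [Real.rpow_nonneg hζm.le p']
  · linarith
  · -- ζp < t
    push_neg at h4 h5
    have htp : ζp < t := h5
    have key1 : ζp ^ (p' - 2) * t ^ 2 ≤ ζp ^ (p' - r) * t ^ r := by
      have e1 : ζp ^ (p' - 2) = ζp ^ (p' - r) * ζp ^ (r - 2) := by
        rw [← Real.rpow_add hζp]; ring_nf
      have e2 : ζp ^ (r - 2) ≤ t ^ (r - 2) :=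
        Real.rpow_le_rpow hζp.le htp.le (by linarith)
      have e3 : t ^ (r - 2) * t ^ 2 = t ^ r := by
        rw [← Real.rpow_natCast t 2, ← Real.rpow_add (lt_of_le_of_lt hζp.le htp)]
        norm_num
      calc ζp ^ (p' - 2) * t ^ 2 = ζp ^ (p' - r) * (ζp ^ (r - 2) * t ^ 2) := by
            rw [e1]; ring
        _ ≤ ζp ^ (p' - r) * (t ^ (r - 2) * t ^ 2) := by
            apply mul_le_mul_of_nonneg_left _ (by positivity)
            apply mul_le_mul_of_nonneg_right e2 (by positivity)
        _ = ζp ^ (p' - r) * t ^ r := by rw [e3]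
    have key2 : ζp ^ p' ≤ t ^ p' := Real.rpow_le_rpow hζp.le htp.le hp0.le
    have X0 : (0:ℝ) ≤ ζp ^ (p' - 2) * t ^ 2 := by positivity
    have c1a : (1/2) * (ζp ^ (p' - 2) * t ^ 2) ≤ (1/p') * (ζp ^ (p' - 2) * t ^ 2) :=
      mul_le_mul_of_nonneg_right hhalf X0
    have c1b : (1/p') * (ζp ^ (p' - 2) * t ^ 2) ≤ (1/p') * (ζp ^ (p' - r) * t ^ r) :=
      mul_le_mul_of_nonneg_left key1 (by positivity)
    have c2 : (1/p' - 1/2) * ζp ^ p' ≤ (1/p') * t ^ p' := by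
      nlinarith [mul_le_mul_of_nonneg_left key2 (show (0:ℝ) ≤ 1/p' - 1/2 by linarith),
        Real.rpow_nonneg ht p']
    nlinarith [c1a, c1b, c2, h2]
/-- Convergence in `ζ`: if `σ` minimizes `𝒥*(τ) = (1/p')∫|τ|^{p'}` and `σ_ζ`
minimizes the regularized energy `𝒥*_ζ(τ) = ∫ κ*_ζ(|τ|)` over a nonempty
closed affine subspace `Σ ⊂ L^{p'}(Ω;ℝ^d)`, and `σ ∈ L^r` for some `r > 2`,
then `𝒥*(σ_ζ) - 𝒥*(σ) ≤ 𝒥*_ζ(σ_ζ) - 𝒥*(σ)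
  ≤ (|Ω|/p') ζ₋^{p'} + (1/p') ζ₊^{-(r-p')} ‖σ‖_{L^r}^r`. -/
theorem stmt_11 {d : ℕ} {Ω : Type*} [MeasurableSpace Ω] (μ : Measure Ω)
    [IsFiniteMeasure μ]
    (p p' r ζm ζp : ℝ) (hp : 2 < p) (hpp' : 1 / p + 1 / p' = 1) (hr : 2 < r)
    (hζm : 0 < ζm) (hζ : ζm ≤ ζp)
    [Fact (1 ≤ ENNReal.ofReal p')]
    (S : AffineSubspace ℝ (Lp (EuclideanSpace ℝ (Fin d)) (ENNReal.ofReal p') μ))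
    (hSne : (S : Set (Lp (EuclideanSpace ℝ (Fin d)) (ENNReal.ofReal p') μ)).Nonempty)
    (hScl : IsClosed (S : Set (Lp (EuclideanSpace ℝ (Fin d)) (ENNReal.ofReal p') μ)))
    (σ σζ : Lp (EuclideanSpace ℝ (Fin d)) (ENNReal.ofReal p') μ)
    (hσS : σ ∈ S) (hσζS : σζ ∈ S)
    (hσmin : ∀ τ ∈ S,
      (1 / p') * ∫ x, ‖σ x‖ ^ p' ∂μ ≤ (1 / p') * ∫ x, ‖τ x‖ ^ p' ∂μ)
    (hσζmin : ∀ τ ∈ S,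
      ∫⁻ x, ENNReal.ofReal (kappaStar p' ζm ζp ‖σζ x‖) ∂μ ≤
        ∫⁻ x, ENNReal.ofReal (kappaStar p' ζm ζp ‖τ x‖) ∂μ)
    (hσr : MemLp (⇑σ) (ENNReal.ofReal r) μ) :
    (1 / p') * ∫ x, ‖σζ x‖ ^ p' ∂μ - (1 / p') * ∫ x, ‖σ x‖ ^ p' ∂μ ≤
      (∫⁻ x, ENNReal.ofReal (kappaStar p' ζm ζp ‖σζ x‖) ∂μ).toReal -
        (1 / p') * ∫ x, ‖σ x‖ ^ p' ∂μ ∧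
    (∫⁻ x, ENNReal.ofReal (kappaStar p' ζm ζp ‖σζ x‖) ∂μ).toReal -
        (1 / p') * ∫ x, ‖σ x‖ ^ p' ∂μ ≤
      (μ Set.univ).toReal / p' * ζm ^ p' +
        (1 / p') * ζp ^ (-(r - p')) * ∫ x, ‖σ x‖ ^ r ∂μ := by
  have hp0 : 0 < p := by linarith
  have hip : 1 / p < 1 / 2 := by
    rw [div_lt_div_iff₀ hp0 (by norm_num)]; linarith
  have hip' : 1 / 2 < 1 / p' := by linarith
  have hp'0 : 0 < p' := one_div_pos.mp (by linarith)
  have hinv : p' * (1 / p') = 1 := mul_one_div_cancel hp'0.ne'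
  have hp'2 : p' < 2 := by nlinarith [mul_lt_mul_of_pos_left hip' hp'0]
  have hp'1 : 1 < p' := by
    have h1 : 1 / p' < 1 := by
      have : 0 < 1 / p := by positivity
      linarith
    nlinarith [mul_lt_mul_of_pos_left h1 hp'0]
  have hζp : 0 < ζp := lt_of_lt_of_le hζm hζ
  have hop0 : ENNReal.ofReal p' ≠ 0 := (ENNReal.ofReal_pos.mpr hp'0).ne'
  have hopt : ENNReal.ofReal p' ≠ ⊤ := ENNReal.ofReal_ne_top
  have htR : (ENNReal.ofReal p').toReal = p' := ENNReal.toReal_ofReal hp'0.le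
  have hint1 : Integrable (fun x => ‖σ x‖ ^ p') μ := by
    simpa [htR] using (Lp.memLp σ).integrable_norm_rpow hop0 hopt
  have hint3 : Integrable (fun x => ‖σζ x‖ ^ p') μ := by
    simpa [htR] using (Lp.memLp σζ).integrable_norm_rpow hop0 hopt
  have hint2 : Integrable (fun x => ‖σ x‖ ^ r) μ := by
    simpa [ENNReal.toReal_ofReal (show (0:ℝ) ≤ r by linarith)] using
      hσr.integrable_norm_rpow (ENNReal.ofReal_pos.mpr (by linarith)).ne' ENNReal.ofReal_ne_top
  set g : Ω → ℝ := fun x =>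
      (1 / p') * ‖σ x‖ ^ p' + (1 / p') * ζm ^ p' + (1 / p') * ζp ^ (p' - r) * ‖σ x‖ ^ r
    with hg
  have hg_int : Integrable g μ :=
    ((hint1.const_mul _).add (integrable_const _)).add (hint2.const_mul _)
  have hg_nn : ∀ x, 0 ≤ g x := fun x => by positivity
  have hgl : ∫⁻ x, ENNReal.ofReal (g x) ∂μ = ENNReal.ofReal (∫ x, g x ∂μ) :=
    (ofReal_integral_eq_lintegral_ofReal hg_int (Filter.Eventually.of_forall hg_nn)).symm
  have hGg : ∫⁻ x, ENNReal.ofReal (kappaStar p' ζm ζp ‖σ x‖) ∂μ ≤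
      ENNReal.ofReal (∫ x, g x ∂μ) := by
    rw [← hgl]
    exact lintegral_mono fun x => ENNReal.ofReal_le_ofReal
      (kappa_upper p' r ζm ζp ‖σ x‖ hp'1 hp'2 hr hζm hζ (norm_nonneg _))
  have hF_le : ∫⁻ x, ENNReal.ofReal (kappaStar p' ζm ζp ‖σζ x‖) ∂μ ≤
      ENNReal.ofReal (∫ x, g x ∂μ) := (hσζmin σ hσS).trans hGg
  have hFne : ∫⁻ x, ENNReal.ofReal (kappaStar p' ζm ζp ‖σζ x‖) ∂μ ≠ ⊤ :=
    ne_top_of_le_ne_top ENNReal.ofReal_ne_top hF_le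
  have hgval : ∫ x, g x ∂μ =
      (1 / p') * (∫ x, ‖σ x‖ ^ p' ∂μ) + (μ Set.univ).toReal * ((1 / p') * ζm ^ p') +
        (1 / p') * ζp ^ (p' - r) * (∫ x, ‖σ x‖ ^ r ∂μ) := by
    rw [hg]
    have h1 := integral_add (μ := μ)
      ((hint1.const_mul (1 / p')).add (integrable_const ((1 / p') * ζm ^ p')))
      (hint2.const_mul ((1 / p') * ζp ^ (p' - r)))
    have h2 := integral_add (μ := μ) (hint1.const_mul (1 / p'))
      (integrable_const ((1 / p') * ζm ^ p'))
    simp only [integral_const_mul, integral_const, smul_eq_mul, Pi.add_apply] at h1 h2 ⊢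
    rw [h1, h2, measureReal_def]
    ring
  have hlow : (1 / p') * ∫ x, ‖σζ x‖ ^ p' ∂μ ≤
      (∫⁻ x, ENNReal.ofReal (kappaStar p' ζm ζp ‖σζ x‖) ∂μ).toReal := by
    have h1 : ENNReal.ofReal (∫ x, (1 / p') * ‖σζ x‖ ^ p' ∂μ) =
        ∫⁻ x, ENNReal.ofReal ((1 / p') * ‖σζ x‖ ^ p') ∂μ :=
      ofReal_integral_eq_lintegral_ofReal (hint3.const_mul _)
        (Filter.Eventually.of_forall fun x => by positivity)
    have h2 : ∫⁻ x, ENNReal.ofReal ((1 / p') * ‖σζ x‖ ^ p') ∂μ ≤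
        ∫⁻ x, ENNReal.ofReal (kappaStar p' ζm ζp ‖σζ x‖) ∂μ :=
      lintegral_mono fun x => ENNReal.ofReal_le_ofReal
        (kappa_lower p' ζm ζp ‖σζ x‖ hp'1 hp'2 hζm hζ (norm_nonneg _))
    have h3 := ENNReal.toReal_mono hFne (h1 ▸ h2)
    rw [ENNReal.toReal_ofReal
      (integral_nonneg fun x => by positivity)] at h3
    rwa [integral_const_mul] at h3
  constructor
  · linarith
  · have hup : (∫⁻ x, ENNReal.ofReal (kappaStar p' ζm ζp ‖σζ x‖) ∂μ).toReal ≤ ∫ x, g x ∂μ :=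
      ENNReal.toReal_le_of_le_ofReal (integral_nonneg hg_nn) hF_le
    rw [hgval] at hup
    rw [neg_sub r p']
    have hB : (μ Set.univ).toReal * ((1 / p') * ζm ^ p') =
        (μ Set.univ).toReal / p' * ζm ^ p' := by ring
    linarith
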